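/- Let k be a field and consider vector bundles on the projective line P^1_k. If O(u_1) ⊕ ⋯ ⊕ O(u_n) ≅ O(v_1) ⊕ ⋯ ⊕ O(v_m) as O_{P^1}-modules, then n = m and the integer sequences (u_1,...,u_n) and (v_1,...,v_m) coincide up to permutation. -/

import Mathlib

open LaurentPolynomial

/-- The inclusion `k[t] → k[t, t⁻¹]`, `t ↦ T`. -/
noncomputable def posHom (k : Type) [Field k] : Polynomial k →+* LaurentPolynomial k :=
  Polynomial.eval₂RingHom LaurentPolynomial.C (T 1)

/-- The inclusion `k[t⁻¹] → k[t, t⁻¹]`, sending the variable to `T⁻¹`. -/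
noncomputable def negHom (k : Type) [Field k] : Polynomial k →+* LaurentPolynomial k :=
  Polynomial.eval₂RingHom LaurentPolynomial.C (T (-1))

namespace Stmt12Aux

variable {k : Type} [Field k]

lemma posHom_eq_toLaurent : posHom k = Polynomial.toLaurent := by
  apply Polynomial.ringHom_ext <;>
    simp [posHom, Polynomial.toLaurent_C, Polynomial.toLaurent_X]

lemma coeff_posHom (p : Polynomial k) {z : ℤ} (hz : z < 0) : (posHom k p).coeff z = 0 := by
  rw [posHom_eq_toLaurent]
  induction p using Polynomial.induction_on' with
  | add p q hp hq => rw [map_add, AddMonoidAlgebra.coeff_add, Finsupp.add_apply, hp, hq, add_zero]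
  | monomial n a =>
      rw [Polynomial.toLaurent_C_mul_T, ← single_eq_C_mul_T, AddMonoidAlgebra.coeff_single, Finsupp.single_apply,
        if_neg (by omega)]

lemma negHom_eq (p : Polynomial k) : negHom k p = invert (posHom k p) := by
  have h : (negHom k) = ((invert (R := k)).toRingEquiv.toRingHom).comp (posHom k) := by
    apply Polynomial.ringHom_ext <;> simp [negHom, posHom]
  rw [h]; rfl

lemma coeff_negHom (p : Polynomial k) {z : ℤ} (hz : 0 < z) : (negHom k p).coeff z = 0 := by
  rw [negHom_eq, invert_apply, coeff_posHom p (by omega)]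

lemma T_apply_mul (d : ℤ) (f : LaurentPolynomial k) (z : ℤ) :
    ((T d * f : LaurentPolynomial k)).coeff z = f.coeff (-d + z) := by
  have h : (T d : LaurentPolynomial k) = AddMonoidAlgebra.single d 1 := rfl
  rw [h, AddMonoidAlgebra.coeff_single_mul_apply, one_mul]

/-- A polynomial in `t` which is `T d` (`d < 0`) times a polynomial in `t⁻¹` is zero. -/
lemma eq_zero_of_pos_T_neg {x y : LaurentPolynomial k} {d : ℤ} (hd : d < 0)
    (hx : x ∈ Set.range (posHom k)) (hy : y ∈ Set.range (negHom k))
    (hxy : x = T d * y) : x = 0 := by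
  obtain ⟨p, hp⟩ := hx
  obtain ⟨q, hq⟩ := hy
  apply LaurentPolynomial.ext
  intro z
  have h0 : (0 : LaurentPolynomial k).coeff z = 0 := rfl
  rw [h0]
  rcases lt_or_ge z 0 with h | h
  · rw [← hp, coeff_posHom p h]
  · rw [hxy, T_apply_mul, ← hq, coeff_negHom q (by omega)]

open Finset in
/-- If the columns of an invertible matrix indexed by `Q` are supported on rows indexed by
`P`, then there are at most as many `Q`-columns as `P`-rows. -/
lemma aux_card {K : Type} [Field K] {n : ℕ} (M N : Matrix (Fin n) (Fin n) K)
    (h : N * M = 1) (P Q : Fin n → Prop) [DecidablePred P] [DecidablePred Q]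
    (hz : ∀ i j, Q j → ¬ P i → M i j = 0) :
    (univ.filter Q).card ≤ (univ.filter P).card := by
  classical
  set L : ({j // Q j} → K) →ₗ[K] ({i // P i} → K) :=
    Matrix.mulVecLin (Matrix.of fun i j => M i.1 j.1) with hL
  have hker : ∀ x, L x = 0 → x = 0 := by
    intro x hx
    set x' : Fin n → K := fun j => if hj : Q j then x ⟨j, hj⟩ else 0 with hx'
    have hM : M.mulVec x' = 0 := by
      funext i
      show ∑ j, M i j * x' j = 0
      by_cases hi : P i
      · have h0 := congrFun hx ⟨i, hi⟩
        have h1 : (L x) ⟨i, hi⟩ = ∑ j : {j // Q j}, M i j.1 * x j := by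
          simp [hL, Matrix.mulVecLin, Matrix.mulVec, dotProduct]
        have h2 : ∑ j, M i j * x' j = ∑ j ∈ univ.filter Q, M i j * x' j := by
          refine (Finset.sum_filter_of_ne ?_).symm
          intro j _ hj
          by_contra hQ
          exact hj (by rw [hx']; simp [hQ])
        have h3 : ∑ j ∈ univ.filter Q, M i j * x' j = ∑ j : {j // Q j}, M i j.1 * x' j.1 :=
          Finset.sum_subtype _ (by simp) _
        have h4 : ∀ j : {j // Q j}, M i j.1 * x' j.1 = M i j.1 * x j := by
          intro j; rw [hx']; simp [j.2]
        rw [h2, h3, Finset.sum_congr rfl fun j _ => h4 j, ← h1, h0]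
        rfl
      · refine Finset.sum_eq_zero fun j _ => ?_
        by_cases hj : Q j
        · rw [hz i j hj hi, zero_mul]
        · rw [hx']; simp [hj]
    have hx0 : x' = 0 := by
      calc x' = (N * M).mulVec x' := by rw [h, Matrix.one_mulVec]
        _ = N.mulVec (M.mulVec x') := by rw [Matrix.mulVec_mulVec]
        _ = 0 := by rw [hM, Matrix.mulVec_zero]
    funext j
    have hj := congrFun hx0 j.1
    rw [hx'] at hj
    simpa [j.2] using hj
  have hinj : Function.Injective L :=
    LinearMap.ker_eq_bot.mp (LinearMap.ker_eq_bot'.mpr hker)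
  calc (univ.filter Q).card = Fintype.card {j // Q j} := (Fintype.card_subtype _).symm
    _ = Module.finrank K ({j // Q j} → K) := (Module.finrank_fintype_fun_eq_card K).symm
    _ ≤ Module.finrank K ({i // P i} → K) := LinearMap.finrank_le_finrank_of_injective hinj
    _ = Fintype.card {i // P i} := Module.finrank_fintype_fun_eq_card K
    _ = (univ.filter P).card := Fintype.card_subtype _

open Finset in
lemma card_eq_split (w : Fin n → ℤ) (d : ℤ) :
    (univ.filter fun i => d ≤ w i).card
      = (univ.filter fun i => w i = d).card + (univ.filter fun i => d + 1 ≤ w i).card := by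
  classical
  rw [← Finset.card_union_of_disjoint]
  · congr 1
    ext i
    simp only [Finset.mem_filter, Finset.mem_union, Finset.mem_univ, true_and]
    omega
  · rw [Finset.disjoint_left]
    intro i hi hi'
    simp only [Finset.mem_filter, Finset.mem_univ, true_and] at hi hi'
    omega

open Finset in
/-- Equal "values = d" counts for all `d` give a permutation matching the two tuples. -/
lemma exists_equiv_of_counts {n : ℕ} (u v : Fin n → ℤ)
    (hc : ∀ d : ℤ, (univ.filter fun i => u i = d).card = (univ.filter fun i => v i = d).card) :
    ∃ e : Fin n ≃ Fin n, ∀ i, v (e i) = u i := by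
  classical
  have hms : ∀ w : Fin n → ℤ, (↑(List.ofFn w) : Multiset ℤ) = Multiset.map w univ.val := by
    intro w
    rw [List.ofFn_eq_map]
    rfl
  have hmeq : (↑(List.ofFn u) : Multiset ℤ) = ↑(List.ofFn v) := by
    rw [hms, hms]
    refine Multiset.ext.mpr fun d => ?_
    rw [Multiset.count_map, Multiset.count_map]
    calc Multiset.card (Multiset.filter (fun a => d = u a) univ.val)
        = (univ.filter fun a => d = u a).card := rfl
      _ = (univ.filter fun a => d = v a).card := by
          have e1 : (univ.filter fun a => d = u a) = (univ.filter fun a => u a = d) := by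
            ext i; simp [eq_comm]
          have e2 : (univ.filter fun a => d = v a) = (univ.filter fun a => v a = d) := by
            ext i; simp [eq_comm]
          rw [e1, e2, hc d]
      _ = Multiset.card (Multiset.filter (fun a => d = v a) univ.val) := rfl
  set σ := Tuple.sort u with hσ
  set τ := Tuple.sort v with hτ
  have hmeq' : (↑(List.ofFn (u ∘ σ)) : Multiset ℤ) = ↑(List.ofFn (v ∘ τ)) := by
    have huσ : ∀ (w : Fin n → ℤ) (e : Equiv.Perm (Fin n)),
        Multiset.map (w ∘ e) univ.val = Multiset.map w univ.val := by
      intro w e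
      have h1 : univ.val.map ⇑e = univ.val := by
        have := congrArg Finset.val (Finset.map_univ_equiv e)
        simpa [Finset.map_val] using this
      calc Multiset.map (w ∘ e) univ.val = Multiset.map w (univ.val.map ⇑e) := by
            rw [Multiset.map_map]
        _ = Multiset.map w univ.val := by rw [h1]
    rw [hms, hms, huσ, huσ, ← hms, ← hms, hmeq]
  have hperm : (List.ofFn (u ∘ σ)).Perm (List.ofFn (v ∘ τ)) := Multiset.coe_eq_coe.mp hmeq'
  have hkey : u ∘ σ = v ∘ τ := by
    apply List.ofFn_injective
    exact List.Perm.eq_of_sortedLE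
      ((List.sortedLE_ofFn_iff).mpr (Tuple.monotone_sort u))
      ((List.sortedLE_ofFn_iff).mpr (Tuple.monotone_sort v)) hperm
  refine ⟨σ.symm.trans τ, fun i => ?_⟩
  have := congrFun hkey (σ.symm i)
  simpa using this.symm

end Stmt12Aux

open Stmt12Aux Finset in
/-- (Uniqueness in Grothendieck's splitting theorem on `ℙ¹_k`.) In terms of transition
matrices over `k[t, t⁻¹]`: an isomorphism `O(u₁) ⊕ ⋯ ⊕ O(uₙ) ≅ O(v₁) ⊕ ⋯ ⊕ O(vₘ)` is a
pair of invertible matrices `A` over `k[t]` and `B` over `k[t⁻¹]` with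
`B · diag(t^{-uᵢ}) = diag(t^{-vⱼ}) · A`.  Whenever such data exist, `n = m` and the
sequences `u`, `v` coincide up to permutation. -/
theorem stmt12 (k : Type) [Field k] {n m : ℕ} (u : Fin n → ℤ) (v : Fin m → ℤ)
    (A : Matrix (Fin m) (Fin n) (LaurentPolynomial k))
    (A' : Matrix (Fin n) (Fin m) (LaurentPolynomial k))
    (B : Matrix (Fin m) (Fin n) (LaurentPolynomial k))
    (B' : Matrix (Fin n) (Fin m) (LaurentPolynomial k))
    (hA : ∀ i j, A i j ∈ Set.range (posHom k)) (hA' : ∀ i j, A' i j ∈ Set.range (posHom k))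
    (hB : ∀ i j, B i j ∈ Set.range (negHom k)) (hB' : ∀ i j, B' i j ∈ Set.range (negHom k))
    (hAA' : A * A' = 1) (hA'A : A' * A = 1)
    (hBB' : B * B' = 1) (hB'B : B' * B = 1)
    (hglue : B * Matrix.diagonal (fun i => T (-(u i)) : Fin n → LaurentPolynomial k)
      = Matrix.diagonal (fun j => T (-(v j)) : Fin m → LaurentPolynomial k) * A) :
    n = m ∧ ∃ e : Fin n ≃ Fin m, ∀ i, v (e i) = u i := by
  classical
  have hnm : n = m := by
    have := Matrix.square_of_invertible A A' hAA' hA'A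
    simpa using this.symm
  subst hnm
  refine ⟨rfl, ?_⟩
  -- entrywise description of A
  have hTinv : ∀ d : ℤ, (T d : LaurentPolynomial k) * T (-d) = 1 := by
    intro d; rw [← T_add, add_neg_cancel, T_zero]
  have hentry : ∀ i j, A i j = T (v i - u j) * B i j := by
    intro i j
    have h : (B * Matrix.diagonal (fun i => T (-(u i)) : Fin n → LaurentPolynomial k)) i j
        = (Matrix.diagonal (fun j => T (-(v j)) : Fin n → LaurentPolynomial k) * A) i j := by
      rw [hglue]
    rw [Matrix.mul_diagonal, Matrix.diagonal_mul] at h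
    rw [T_sub]
    linear_combination (-(T (v i) : LaurentPolynomial k)) * h - (A i j) * hTinv (v i)
  -- the matrix X = diag(T u) * B' * diag(T (-v)) is the inverse of A, hence equals A'
  set X : Matrix (Fin n) (Fin n) (LaurentPolynomial k) :=
    Matrix.diagonal (fun i => T (u i)) * B' * Matrix.diagonal (fun j => T (-(v j))) with hX
  have hdiag1 : ∀ w : Fin n → ℤ,
      Matrix.diagonal (fun i => (T (w i) : LaurentPolynomial k))
        * Matrix.diagonal (fun i => T (-(w i))) = 1 := by
    intro w
    rw [Matrix.diagonal_mul_diagonal]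
    have : (fun i => (T (w i) : LaurentPolynomial k) * T (-(w i))) = fun _ => 1 := by
      funext i; exact hTinv (w i)
    rw [this, Matrix.diagonal_one]
  have hArw : A = Matrix.diagonal (fun j => T (v j))
      * B * Matrix.diagonal (fun i => (T (-(u i)) : LaurentPolynomial k)) := by
    rw [mul_assoc, hglue, ← mul_assoc, hdiag1 v, one_mul]
  have hAX : A * X = 1 := by
    rw [hArw, hX]
    calc Matrix.diagonal (fun j => (T (v j) : LaurentPolynomial k)) * B
          * Matrix.diagonal (fun i => (T (-(u i)) : LaurentPolynomial k))
          * (Matrix.diagonal (fun i => (T (u i) : LaurentPolynomial k)) * B'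
            * Matrix.diagonal (fun j => T (-(v j))))
        = Matrix.diagonal (fun j => (T (v j) : LaurentPolynomial k)) * (B
          * (Matrix.diagonal (fun i => (T (-(u i)) : LaurentPolynomial k))
            * Matrix.diagonal (fun i => (T (u i) : LaurentPolynomial k))) * B')
          * Matrix.diagonal (fun j => T (-(v j))) := by
          simp only [Matrix.mul_assoc]
      _ = 1 := by
          have h1 : Matrix.diagonal (fun i => (T (-(u i)) : LaurentPolynomial k))
              * Matrix.diagonal (fun i => (T (u i) : LaurentPolynomial k)) = 1 := by
            rw [Matrix.diagonal_mul_diagonal]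
            have he : (fun i => (T (-(u i)) : LaurentPolynomial k) * T (u i)) = fun _ => 1 := by
              funext i
              have := hTinv (-(u i))
              rwa [neg_neg] at this
            rw [he, Matrix.diagonal_one]
          rw [h1, Matrix.mul_one, hBB', Matrix.mul_one, hdiag1 v]
  have hA'X : A' = X := by
    calc A' = A' * (A * X) := by rw [hAX, Matrix.mul_one]
      _ = (A' * A) * X := by rw [Matrix.mul_assoc]
      _ = X := by rw [hA'A, Matrix.one_mul]
  have hentry' : ∀ i j, A' i j = T (u i - v j) * B' i j := by
    intro i j
    rw [hA'X, hX, Matrix.mul_diagonal, Matrix.diagonal_mul, T_sub]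
    ring
  -- vanishing of entries
  have hAz : ∀ i j, v i < u j → A i j = 0 := fun i j hij =>
    eq_zero_of_pos_T_neg (d := v i - u j) (by omega) (hA i j) (hB i j) (hentry i j)
  have hA'z : ∀ i j, u i < v j → A' i j = 0 := fun i j hij =>
    eq_zero_of_pos_T_neg (d := u i - v j) (by omega) (hA' i j) (hB' i j) (hentry' i j)
  -- pass to the fraction field and count
  letI : IsDomain (LaurentPolynomial k) := NoZeroDivisors.to_isDomain _
  set K := FractionRing (LaurentPolynomial k) with hK
  set φ : LaurentPolynomial k →+* K := algebraMap (LaurentPolynomial k) K with hφ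
  have hmap : ∀ (M N : Matrix (Fin n) (Fin n) (LaurentPolynomial k)), M * N = 1 →
      (M.map φ) * (N.map φ) = 1 := by
    intro M N hMN
    rw [← Matrix.map_mul, hMN, Matrix.map_one φ (map_zero φ) (map_one φ)]
  have hcount : ∀ d : ℤ, (univ.filter fun j => d ≤ u j).card
      = (univ.filter fun i => d ≤ v i).card := by
    intro d
    refine le_antisymm ?_ ?_
    · refine aux_card (A.map φ) (A'.map φ) (hmap A' A hA'A)
        (fun i => d ≤ v i) (fun j => d ≤ u j) ?_
      intro i j hQ hP
      rw [Matrix.map_apply, hAz i j (by omega), map_zero]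
    · refine aux_card (A'.map φ) (A.map φ) (hmap A A' hAA')
        (fun j => d ≤ u j) (fun i => d ≤ v i) ?_
      intro i j hQ hP
      rw [Matrix.map_apply, hA'z i j (by omega), map_zero]
  have hfib : ∀ d : ℤ, (univ.filter fun i => u i = d).card
      = (univ.filter fun i => v i = d).card := by
    intro d
    have h1 := hcount d
    have h2 := hcount (d + 1)
    have h3 := card_eq_split u d
    have h4 := card_eq_split v d
    omega
  exact exists_equiv_of_counts u v hfib
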